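/- Let A be an n×n symmetric positive definite matrix with unit diagonal (i.e., already Jacobi scaled). Then κ(A) ≤ n · min_D κ(D A D), where the minimum is over positive diagonal matrices D and κ denotes the 2-norm condition number. -/

import Mathlib

open Finset in
lemma vds_apply {n : ℕ} (M : Matrix (Fin n) (Fin n) ℝ) (x : EuclideanSpace ℝ (Fin n)) (i : Fin n) :
    (Matrix.toEuclideanCLM (𝕜 := ℝ) M x) i = ∑ j, M i j * x j := rfl

lemma vds_abs_le_norm {n : ℕ} (x : EuclideanSpace ℝ (Fin n)) (i : Fin n) : |x i| ≤ ‖x‖ := by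
  rw [EuclideanSpace.norm_eq]
  have : |x i| = Real.sqrt (‖x i‖^2) := by
    rw [Real.sqrt_sq_eq_abs]; simp
  rw [this]
  exact Real.sqrt_le_sqrt (Finset.single_le_sum (f := fun j => ‖x j‖^2)
    (fun j _ => by positivity) (Finset.mem_univ i))

lemma vds_opnorm_le {n : ℕ} (M : Matrix (Fin n) (Fin n) ℝ) (c : ℝ) (hc : 0 ≤ c)
    (h : ∀ i j, |M i j| ≤ c) : ‖Matrix.toEuclideanCLM (𝕜 := ℝ) M‖ ≤ n * c := by
  apply ContinuousLinearMap.opNorm_le_bound _ (by positivity)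
  intro x
  set T := Matrix.toEuclideanCLM (𝕜 := ℝ) M
  have hx : ∀ i, |(T x) i| ≤ c * ∑ j, |x j| := by
    intro i
    rw [vds_apply]
    calc |∑ j, M i j * x j| ≤ ∑ j, |M i j * x j| := Finset.abs_sum_le_sum_abs _ _
      _ ≤ ∑ j, c * |x j| := Finset.sum_le_sum fun j _ => by
          rw [abs_mul]; exact mul_le_mul_of_nonneg_right (h i j) (abs_nonneg _)
      _ = c * ∑ j, |x j| := by rw [Finset.mul_sum]
  have hs : (∑ j, |x j|)^2 ≤ n * ‖x‖^2 := by
    have h1 := sq_sum_le_card_mul_sum_sq (s := Finset.univ) (f := fun j : Fin n => |x j|)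
    have h2 : ‖x‖^2 = ∑ j, |x j|^2 := by
      rw [EuclideanSpace.norm_eq, Real.sq_sqrt (by positivity)]
      simp [Real.norm_eq_abs]
    simpa [h2, sq_abs] using h1
  have key : ‖T x‖^2 ≤ (↑n * c * ‖x‖)^2 := by
    rw [EuclideanSpace.norm_eq, Real.sq_sqrt (by positivity)]
    have : ∀ i : Fin n, ‖(T x) i‖^2 ≤ c^2 * (∑ j, |x j|)^2 := fun i => by
      rw [Real.norm_eq_abs, ← mul_pow]
      exact pow_le_pow_left₀ (abs_nonneg _) (by
        calc |(T x) i| ≤ c * ∑ j, |x j| := hx i) 2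
    calc (∑ i, ‖(T x) i‖^2) ≤ ∑ _i : Fin n, c^2 * (∑ j, |x j|)^2 :=
          Finset.sum_le_sum fun i _ => this i
      _ = n * (c^2 * (∑ j, |x j|)^2) := by rw [Finset.sum_const, Finset.card_univ]; simp [nsmul_eq_mul]
      _ ≤ n * (c^2 * (n * ‖x‖^2)) := by
          apply mul_le_mul_of_nonneg_left (mul_le_mul_of_nonneg_left hs (by positivity))
            (by positivity)
      _ = (↑n * c * ‖x‖)^2 := by ring
  have h0 : (0:ℝ) ≤ ↑n * c * ‖x‖ := by positivity
  nlinarith [norm_nonneg (T x)]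

lemma vds_opnorm_diag_le {n : ℕ} (d : Fin n → ℝ) (c : ℝ) (hc : 0 ≤ c) (h : ∀ i, |d i| ≤ c) :
    ‖Matrix.toEuclideanCLM (𝕜 := ℝ) (Matrix.diagonal d)‖ ≤ c := by
  apply ContinuousLinearMap.opNorm_le_bound _ hc
  intro x
  set T := Matrix.toEuclideanCLM (𝕜 := ℝ) (Matrix.diagonal d)
  have happ : ∀ i, (T x) i = d i * x i := by
    intro i; rw [vds_apply]
    simp [Matrix.diagonal_apply, Finset.sum_ite_eq, ite_mul]
  have key : ‖T x‖^2 ≤ (c * ‖x‖)^2 := by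
    rw [mul_pow, EuclideanSpace.norm_eq, EuclideanSpace.norm_eq,
      Real.sq_sqrt (by positivity), Real.sq_sqrt (by positivity), Finset.mul_sum]
    apply Finset.sum_le_sum
    intro i _
    rw [happ, Real.norm_eq_abs, Real.norm_eq_abs, abs_mul, mul_pow]
    exact mul_le_mul_of_nonneg_right (pow_le_pow_left₀ (abs_nonneg _) (h i) 2) (by positivity)
  have h0 : (0:ℝ) ≤ c * ‖x‖ := by positivity
  nlinarith [norm_nonneg (T x)]

lemma vds_diag_le_opnorm {n : ℕ} (M : Matrix (Fin n) (Fin n) ℝ) (i : Fin n) :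
    |M i i| ≤ ‖Matrix.toEuclideanCLM (𝕜 := ℝ) M‖ := by
  set T := Matrix.toEuclideanCLM (𝕜 := ℝ) M
  have h1 : (T (EuclideanSpace.single i 1)) i = M i i := by
    rw [vds_apply]
    simp [EuclideanSpace.single_apply]
  calc |M i i| = |(T (EuclideanSpace.single i 1)) i| := by rw [h1]
    _ ≤ ‖T (EuclideanSpace.single i 1)‖ := vds_abs_le_norm _ i
    _ ≤ ‖T‖ * ‖EuclideanSpace.single i (1:ℝ)‖ := T.le_opNorm _
    _ = ‖T‖ := by rw [EuclideanSpace.norm_single, norm_one, mul_one]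


lemma vds_entry_le {n : ℕ} (A : Matrix (Fin n) (Fin n) ℝ) (hA : A.PosDef)
    (hdiag : ∀ i, A i i = 1) (i j : Fin n) : |A i j| ≤ 1 := by
  rcases eq_or_ne i j with rfl | hij
  · rw [hdiag i]; norm_num
  · set t := A i j with ht
    have hsym : A j i = A i j := by
      have h2 := congrFun (congrFun hA.1 j) i
      simpa [Matrix.conjTranspose_apply] using h2.symm
    set x : Fin n → ℝ := (Pi.single i 1 : Fin n → ℝ) - t • (Pi.single j 1 : Fin n → ℝ) with hx
    have h0 := hA.posSemidef.dotProduct_mulVec_nonneg x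
    have hcalc : dotProduct (star x) (A.mulVec x) = 1 - t^2 := by
      rw [hx]
      simp [sub_dotProduct, dotProduct_sub, Matrix.mulVec_sub,
        smul_dotProduct, dotProduct_smul, Matrix.mulVec_smul,
        Matrix.mulVec_single, single_dotProduct, dotProduct_single,
        hdiag, hsym]
      ring
    rw [hcalc] at h0
    nlinarith [abs_nonneg t, sq_abs t]



/-- The 2-norm condition number `κ(M) = ‖M‖₂ ‖M⁻¹‖₂`, via the operator norm on
Euclidean space. -/
noncomputable def kappa {n : ℕ} (M : Matrix (Fin n) (Fin n) ℝ) : ℝ :=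
  ‖Matrix.toEuclideanCLM (𝕜 := ℝ) M‖ * ‖Matrix.toEuclideanCLM (𝕜 := ℝ) M⁻¹‖

/-- Van der Sluis, Theorem 4.1: if `A` is symmetric positive definite with unit
diagonal, then `κ(A) ≤ n ⋅ min_D κ(D A D)` over positive diagonal `D`. -/
theorem stmt_13 (n : ℕ) (A : Matrix (Fin n) (Fin n) ℝ)
    (hA : A.PosDef) (hdiag : ∀ i, A i i = 1) :
    ∀ d : Fin n → ℝ, (∀ i, 0 < d i) →
      kappa A ≤ n * kappa (Matrix.diagonal d * A * Matrix.diagonal d) := by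
  intro d hd
  rcases Nat.eq_zero_or_pos n with hn | hn
  · subst hn
    haveI : Subsingleton (EuclideanSpace ℝ (Fin 0)) :=
      ⟨fun a b => PiLp.ext fun i => i.elim0⟩
    have hz : ∀ M : Matrix (Fin 0) (Fin 0) ℝ, ‖Matrix.toEuclideanCLM (𝕜 := ℝ) M‖ = 0 :=
      fun M => ContinuousLinearMap.opNorm_subsingleton _
    unfold kappa
    rw [hz, hz, zero_mul, Nat.cast_zero, zero_mul]
  · haveI : Nonempty (Fin n) := Fin.pos_iff_nonempty.mp hn
    obtain ⟨i0, hi0⟩ := Finite.exists_max d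
    set c := d i0 with hc
    have hcpos : 0 < c := hd i0
    set D := Matrix.diagonal d with hD
    set B := D * A * D with hB
    have hDdet : IsUnit D.det := by
      rw [hD, Matrix.det_diagonal]
      exact isUnit_iff_ne_zero.mpr (Finset.prod_pos (fun i _ => hd i)).ne'
    have hAinv : A⁻¹ = D * B⁻¹ * D := by
      rw [hB, Matrix.mul_inv_rev, Matrix.mul_inv_rev]
      rw [show D * (D⁻¹ * (A⁻¹ * D⁻¹)) * D = (D * D⁻¹) * A⁻¹ * (D⁻¹ * D) by noncomm_ring,
        Matrix.mul_nonsing_inv _ hDdet, Matrix.nonsing_inv_mul _ hDdet, one_mul, mul_one]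
    set T := Matrix.toEuclideanCLM (n := Fin n) (𝕜 := ℝ)
    have h1 : ‖T A‖ ≤ (n : ℝ) := by
      have := vds_opnorm_le A 1 zero_le_one (vds_entry_le A hA hdiag)
      simpa using this
    have h2 : ‖T D‖ ≤ c := vds_opnorm_diag_le d c hcpos.le
      (fun i => by rw [abs_of_pos (hd i)]; exact hi0 i)
    have h3 : c^2 ≤ ‖T B‖ := by
      have hBii : B i0 i0 = c^2 := by
        rw [hB, hD, Matrix.mul_diagonal, Matrix.diagonal_mul, hdiag]
        ring
      have := vds_diag_le_opnorm B i0
      rw [hBii, abs_of_pos (by positivity)] at this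
      exact this
    have h4 : ‖T A⁻¹‖ ≤ c^2 * ‖T B⁻¹‖ := by
      rw [hAinv, map_mul, map_mul]
      calc ‖T D * T B⁻¹ * T D‖ ≤ ‖T D * T B⁻¹‖ * ‖T D‖ := norm_mul_le _ _
        _ ≤ ‖T D‖ * ‖T B⁻¹‖ * ‖T D‖ :=
            mul_le_mul_of_nonneg_right (norm_mul_le _ _) (norm_nonneg _)
        _ ≤ c * ‖T B⁻¹‖ * c := by
            apply mul_le_mul (mul_le_mul_of_nonneg_right h2 (norm_nonneg _)) h2
              (norm_nonneg _) (by positivity)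
        _ = c^2 * ‖T B⁻¹‖ := by ring
    have hn1 : (1:ℝ) ≤ (n:ℝ) := by exact_mod_cast hn
    show ‖T A‖ * ‖T A⁻¹‖ ≤ n * (‖T B‖ * ‖T B⁻¹‖)
    calc ‖T A‖ * ‖T A⁻¹‖ ≤ (n:ℝ) * (c^2 * ‖T B⁻¹‖) :=
          mul_le_mul h1 h4 (norm_nonneg _) (le_trans zero_le_one hn1)
      _ ≤ (n:ℝ) * (‖T B‖ * ‖T B⁻¹‖) :=
          mul_le_mul_of_nonneg_left
            (mul_le_mul_of_nonneg_right h3 (norm_nonneg _)) (by positivity)
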